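/- arXiv:2002.04190 — 2 statements merged into one kernel-verified Lean document; each statement's English description precedes it below -/
import Mathlib

section
/- Let (a_n) be an arithmetic sequence and x ∈ 𝕋 with canonical representation x = Σ c_n/a_n. For all n ∈ ℕ, the fractional part satisfies the recursion {a_{n-1}x} = c_n/q_n + {a_n x}/q_n, where {y} ∈ [0,1) denotes the canonical representative of y mod 1. -/
open Filter Topology Set

/-- Upper natural density of a set of naturals. -/
noncomputable def upperDensity (A : Set ℕ) : ℝ :=
  Filter.limsup (fun n => (Nat.card ↥(A ∩ Set.Iio n) : ℝ) / n) Filter.atTop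

/-- `A` has natural density `δ`. -/
def HasDensity (A : Set ℕ) (δ : ℝ) : Prop :=
  Filter.Tendsto (fun n => (Nat.card ↥(A ∩ Set.Iio n) : ℝ) / n) Filter.atTop (nhds δ)

/-- Statistical convergence of a real sequence. -/
def StatTendsto (x : ℕ → ℝ) (ξ : ℝ) : Prop :=
  ∀ ε : ℝ, 0 < ε → HasDensity {n | ε ≤ |x n - ξ|} 0

/-- An arithmetic sequence: `a 0 = 1 < a 1 < a 2 < ⋯` and `a n ∣ a (n+1)`. -/
def IsArithmeticSeq (a : ℕ → ℕ) : Prop :=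
  a 0 = 1 ∧ StrictMono a ∧ ∀ n, a n ∣ a (n + 1)

/-- The ratio `q n = a n / a (n-1)` as a real number. -/
noncomputable def qr (a : ℕ → ℕ) (n : ℕ) : ℝ := (a n : ℝ) / (a (n - 1) : ℝ)

/-- `(c n)` is a canonical representation sequence w.r.t. `(a n)`:
`0 ≤ c n < q n` and `c n < q n - 1` for infinitely many `n`. -/
def IsCanonicalRep (a : ℕ → ℕ) (c : ℕ → ℕ) : Prop :=
  c 0 = 0 ∧ (∀ n, 1 ≤ n → c n < a n / a (n - 1)) ∧
    (∀ N, ∃ n, N ≤ n ∧ 1 ≤ n ∧ c n + 1 < a n / a (n - 1))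

/-- Support of (the canonical representation of) `x`. -/
def suppRep (c : ℕ → ℕ) : Set ℕ := {n | 1 ≤ n ∧ c n ≠ 0}

/-- `supp_q(x) = {n : c n = q n - 1}`. -/
def suppqRep (a c : ℕ → ℕ) : Set ℕ := {n | 1 ≤ n ∧ c n + 1 = a n / a (n - 1)}

/-- A set `S ⊆ ℕ` is `q`-bounded if `(q n)` is bounded on `S`. -/
def QBounded (a : ℕ → ℕ) (S : Set ℕ) : Prop := ∃ M, ∀ n ∈ S, a n / a (n - 1) ≤ M

/-- A set `S ⊆ ℕ` is `q`-divergent if `q n → ∞` along `n ∈ S`. -/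
def QDivergent (a : ℕ → ℕ) (S : Set ℕ) : Prop :=
  Filter.Tendsto (fun n => a n / a (n - 1)) (Filter.atTop ⊓ Filter.principal S) Filter.atTop

/-- Statistical convergence in a topological space, via neighborhoods. -/
def StatNhdTendsto {α : Type*} [TopologicalSpace α] (y : ℕ → α) (ℓ : α) : Prop :=
  ∀ U ∈ nhds ℓ, HasDensity {n | y n ∉ U} 0

section Aux

variable (a c : ℕ → ℕ)

theorem aux_apos (ha : IsArithmeticSeq a) (n : ℕ) : 0 < a n :=
  lt_of_lt_of_le (by omega) (ha.1 ▸ ha.2.1.monotone (Nat.zero_le n))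

theorem aux_advd (ha : IsArithmeticSeq a) {m n : ℕ} (h : m ≤ n) : a m ∣ a n := by
  induction n with
  | zero => simpa [Nat.le_zero.1 h]
  | succ k ih =>
      rcases Nat.lt_or_ge m (k+1) with h' | h'
      · exact (ih (by omega)).trans (ha.2.2 k)
      · have : m = k + 1 := le_antisymm h h'
        simp [this]

theorem aux_atwo (ha : IsArithmeticSeq a) (n : ℕ) : 2 * a n ≤ a (n + 1) := by
  obtain ⟨k, hk⟩ := ha.2.2 n
  have h1 : a n < a (n+1) := ha.2.1 (by omega)
  have h0 : 0 < a n := aux_apos a ha n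
  have : 2 ≤ k := by nlinarith [hk ▸ h1]
  nlinarith [hk]

theorem aux_apow (ha : IsArithmeticSeq a) (n i : ℕ) : 2 ^ i * a n ≤ a (i + n) := by
  induction i with
  | zero => simp
  | succ k ih =>
      have := aux_atwo a ha (k + n)
      calc 2 ^ (k+1) * a n = 2 * (2^k * a n) := by ring
        _ ≤ 2 * a (k + n) := by omega
        _ ≤ a (k + n + 1) := this
        _ = a (k + 1 + n) := by ring_nf

theorem aux_cb (ha : IsArithmeticSeq a) (hc : IsCanonicalRep a c) {i : ℕ} (hi : 1 ≤ i) :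
    (c i + 1) * a (i - 1) ≤ a i := by
  have h := hc.2.1 i hi
  have hd : a (i-1) ∣ a i := aux_advd a ha (by omega)
  have := Nat.succ_le_of_lt h
  calc (c i + 1) * a (i-1) ≤ (a i / a (i-1)) * a (i-1) := Nat.mul_le_mul_right _ this
    _ = a i := Nat.div_mul_cancel hd

theorem aux_cb' (ha : IsArithmeticSeq a) {j : ℕ} (hj : 1 ≤ j)
    (h : c j + 1 < a j / a (j - 1)) : (c j + 1) * a (j - 1) < a j := by
  have hd : a (j-1) ∣ a j := aux_advd a ha (by omega)
  have hp : 0 < a (j-1) := aux_apos a ha _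
  have h2 : (c j + 2) * a (j-1) ≤ (a j / a (j-1)) * a (j-1) :=
    Nat.mul_le_mul_right _ (by omega)
  have h3 := h2.trans_eq (Nat.div_mul_cancel hd)
  nlinarith

end Aux

section Real

variable (a c : ℕ → ℕ)

theorem aux_rpos (ha : IsArithmeticSeq a) (n : ℕ) : (0:ℝ) < a n := by
  exact_mod_cast aux_apos a ha n

theorem aux_key {cn an1 an M : ℝ} (h1 : 0 < an1) (h2 : 0 < an) (hM : 0 < M)
    (h : (cn + 1) * an1 ≤ an) : cn * M / an ≤ M / an1 - M / an := by
  rw [div_sub_div _ _ h1.ne' h2.ne', div_le_div_iff₀ h2 (mul_pos h1 h2)]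
  nlinarith [mul_nonneg (mul_pos hM h2).le (sub_nonneg.2 h)]

theorem aux_key_lt {cn an1 an M : ℝ} (h1 : 0 < an1) (h2 : 0 < an) (hM : 0 < M)
    (h : (cn + 1) * an1 < an) : cn * M / an < M / an1 - M / an := by
  rw [div_sub_div _ _ h1.ne' h2.ne', div_lt_div_iff₀ h2 (mul_pos h1 h2)]
  nlinarith [mul_pos (mul_pos hM h2) (sub_pos.2 h)]

theorem aux_summable (ha : IsArithmeticSeq a) (hc : IsCanonicalRep a c) :
    Summable (fun i => (c i : ℝ) / (a i : ℝ)) := by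
  have hnn : ∀ i, (0:ℝ) ≤ (c i : ℝ) / (a i : ℝ) := fun i => by positivity
  have hgs : Summable (fun i => 2 * (1/2 : ℝ)^i) := (summable_geometric_two).mul_left 2
  refine Summable.of_nonneg_of_le hnn (fun i => ?_) hgs
  · 
    rcases Nat.eq_zero_or_pos i with rfl | hi
    · simp [hc.1]
    · obtain ⟨k, rfl⟩ := Nat.exists_eq_succ_of_ne_zero (by omega : i ≠ 0)
      have hkey := aux_cb a c ha hc hi
      simp only [Nat.succ_eq_add_one, Nat.add_sub_cancel] at hkey ⊢
      have h1 : (0:ℝ) < a k := aux_rpos a ha _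
      have h2 : (0:ℝ) < a (k+1) := aux_rpos a ha _
      have hle : (c (k+1) : ℝ) / a (k+1) ≤ 1 / a k := by
        rw [div_le_div_iff₀ h2 h1]
        have : ((c (k+1) : ℝ) + 1) * a k ≤ a (k+1) := by exact_mod_cast hkey
        nlinarith
      have hpow : (2:ℝ) ^ k ≤ a k := by
        have h := aux_apow a ha 0 k
        rw [ha.1, Nat.mul_one, Nat.add_zero] at h
        exact_mod_cast h
      have h3 : (1:ℝ) / a k ≤ 1 / 2^k := by
        apply one_div_le_one_div_of_le (by positivity) hpow
      have h4 : (2:ℝ) * (1/2)^(k+1) = 1 / 2^k := by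
        rw [pow_succ, one_div_pow]; ring
      rw [h4]
      exact hle.trans h3

end Real

section Tail

variable (a c : ℕ → ℕ)

/-- The tail function: `g n i = c (i+n+1) * a n / a (i+n+1)`. -/
noncomputable def gfun (n i : ℕ) : ℝ := (c (i+n+1) : ℝ) * (a n : ℝ) / (a (i+n+1) : ℝ)

/-- telescoping upper bound function -/
noncomputable def tfun (n i : ℕ) : ℝ := (a n : ℝ) / (a (i+n) : ℝ) - (a n : ℝ) / (a (i+1+n) : ℝ)

theorem g_nonneg (n i : ℕ) : 0 ≤ gfun a c n i := by unfold gfun; positivity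

theorem g_le_t (ha : IsArithmeticSeq a) (hc : IsCanonicalRep a c) (n i : ℕ) :
    gfun a c n i ≤ tfun a n i := by
  have hkey := aux_cb a c ha hc (i := i+n+1) (by omega)
  simp only [Nat.add_sub_cancel] at hkey
  have h1 : (0:ℝ) < a (i+n) := aux_rpos a ha _
  have h2 : (0:ℝ) < a (i+n+1) := aux_rpos a ha _
  have hM : (0:ℝ) < a n := aux_rpos a ha _
  have e : i + 1 + n = i + n + 1 := by omega
  unfold gfun tfun
  rw [e]
  exact aux_key h1 h2 hM (by exact_mod_cast hkey)

theorem t_nonneg (ha : IsArithmeticSeq a) (n i : ℕ) : 0 ≤ tfun a n i := by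
  have h1 : (0:ℝ) < a (i+n) := aux_rpos a ha _
  have h2 : (0:ℝ) < a (i+1+n) := aux_rpos a ha _
  have hM : (0:ℝ) ≤ a n := (aux_rpos a ha n).le
  have hle : (a (i+n) : ℝ) ≤ a (i+1+n) := by
    exact_mod_cast (ha.2.1.monotone (by omega : i+n ≤ i+1+n))
  unfold tfun
  rw [sub_nonneg]
  exact div_le_div_of_nonneg_left hM h1 hle |>.trans_eq rfl |> fun h => by
    exact div_le_div_of_nonneg_left hM h1 hle

/-- partial sums of `tfun` telescope -/
theorem t_partial (n k : ℕ) :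
    ∑ i ∈ Finset.range k, tfun a n i = (a n : ℝ) / (a n : ℝ) - (a n : ℝ) / (a (k+n) : ℝ) := by
  have := Finset.sum_range_sub' (fun i => (a n : ℝ) / (a (i+n) : ℝ)) k
  simpa [tfun] using this

theorem quotient_tendsto (ha : IsArithmeticSeq a) (n : ℕ) :
    Filter.Tendsto (fun k => (a n : ℝ) / (a (k+n) : ℝ)) Filter.atTop (nhds 0) := by
  have hb : ∀ k, (a n : ℝ) / (a (k+n) : ℝ) ≤ (1/2:ℝ)^k := by
    intro k
    have hp := aux_apow a ha n k
    have h1 : (0:ℝ) < a (k+n) := aux_rpos a ha _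
    have hM : (0:ℝ) < a n := aux_rpos a ha _
    have hp' : (2:ℝ)^k * a n ≤ a (k+n) := by exact_mod_cast hp
    rw [div_le_iff₀ h1, div_pow, one_pow, div_mul_eq_mul_div, le_div_iff₀ (by positivity)]
    nlinarith
  have hb0 : ∀ k, (0:ℝ) ≤ (a n : ℝ) / (a (k+n) : ℝ) := fun k => by positivity
  have hg : Filter.Tendsto (fun k : ℕ => (1/2:ℝ)^k) Filter.atTop (nhds 0) := by
    apply tendsto_pow_atTop_nhds_zero_of_lt_one <;> norm_num
  exact squeeze_zero hb0 hb hg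

theorem t_hasSum (ha : IsArithmeticSeq a) (n : ℕ) : HasSum (tfun a n) 1 := by
  have hsummable : Summable (tfun a n) := by
    apply summable_of_sum_range_le (c := 1) (t_nonneg a ha n)
    intro k
    rw [t_partial]
    have hM : (0:ℝ) < a n := aux_rpos a ha _
    have h1 : (0:ℝ) < a (k+n) := aux_rpos a ha _
    have : (0:ℝ) ≤ (a n : ℝ) / (a (k+n) : ℝ) := by positivity
    rw [div_self hM.ne']
    linarith
  have h1 := hsummable.hasSum
  have h2 := h1.tendsto_sum_nat
  have h3 : Filter.Tendsto (fun k => ∑ i ∈ Finset.range k, tfun a n i) Filter.atTop (nhds 1) := by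
    have hM : (0:ℝ) < a n := aux_rpos a ha _
    have := (quotient_tendsto a ha n)
    have h4 : Filter.Tendsto (fun k => (a n : ℝ) / (a n : ℝ) - (a n : ℝ) / (a (k+n) : ℝ))
        Filter.atTop (nhds ((a n : ℝ) / (a n : ℝ) - 0)) := tendsto_const_nhds.sub this
    rw [div_self hM.ne', sub_zero] at h4
    have e : ∀ k, ∑ i ∈ Finset.range k, tfun a n i = 1 - (a n : ℝ) / (a (k+n) : ℝ) := by
      intro k; rw [t_partial, div_self hM.ne']
    simp only [e]
    simpa using h4
  rw [tendsto_nhds_unique h2 h3] at h1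
  exact h1

theorem g_summable (ha : IsArithmeticSeq a) (hc : IsCanonicalRep a c) (n : ℕ) :
    Summable (gfun a c n) :=
  Summable.of_nonneg_of_le (g_nonneg a c n) (g_le_t a c ha hc n) (t_hasSum a ha n).summable

theorem tsum_g_lt_one (ha : IsArithmeticSeq a) (hc : IsCanonicalRep a c) (n : ℕ) :
    ∑' i, gfun a c n i < 1 := by
  obtain ⟨j, hj1, hj2, hj3⟩ := hc.2.2 (n+1)
  have hlt := aux_cb' a c ha hj2 hj3
  set i0 := j - (n+1) with hi0
  have hji : i0 + n + 1 = j := by omega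
  have hstrict : gfun a c n i0 < tfun a n i0 := by
    have h1 : (0:ℝ) < a (i0+n) := aux_rpos a ha _
    have h2 : (0:ℝ) < a (i0+n+1) := aux_rpos a ha _
    have hM : (0:ℝ) < a n := aux_rpos a ha _
    have e : i0 + 1 + n = i0 + n + 1 := by omega
    have hkey : (c (i0+n+1) + 1) * a (i0+n) < a (i0+n+1) := by
      rw [hji]
      have : j - 1 = i0 + n := by omega
      rw [← this]
      exact hlt
    unfold gfun tfun
    rw [e]
    exact aux_key_lt h1 h2 hM (by exact_mod_cast hkey)
  calc ∑' i, gfun a c n i < ∑' i, tfun a n i :=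
        Summable.tsum_lt_tsum (g_le_t a c ha hc n) hstrict (g_summable a c ha hc n) (t_hasSum a ha n).summable
    _ = 1 := (t_hasSum a ha n).tsum_eq

end Tail

section Main

variable (a c : ℕ → ℕ)

theorem fract_eq (ha : IsArithmeticSeq a) (hc : IsCanonicalRep a c) (n : ℕ) :
    Int.fract ((a n : ℝ) * ∑' i, (c i : ℝ) / (a i : ℝ)) = ∑' i, gfun a c n i := by
  have hsf := aux_summable a c ha hc
  have hs : Summable (fun i => (a n : ℝ) * ((c i : ℝ) / (a i : ℝ))) := hsf.mul_left _
  have hx : (a n : ℝ) * ∑' i, (c i : ℝ) / (a i : ℝ)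
      = ∑' i, (a n : ℝ) * ((c i : ℝ) / (a i : ℝ)) := (tsum_mul_left).symm
  have hsplit := (Summable.sum_add_tsum_nat_add (f := fun i => (a n : ℝ) * ((c i : ℝ) / (a i : ℝ)))
    (n+1) hs).symm
  have htail : ∑' i, (a n : ℝ) * ((c (i+(n+1)) : ℝ) / (a (i+(n+1)) : ℝ)) = ∑' i, gfun a c n i := by
    refine tsum_congr fun i => ?_
    show (a n : ℝ) * ((c (i+n+1) : ℝ) / (a (i+n+1) : ℝ)) = gfun a c n i
    unfold gfun; ring
  set N : ℕ := ∑ i ∈ Finset.range (n+1), a n / a i * c i with hN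
  have hfin : ∑ i ∈ Finset.range (n+1), (a n : ℝ) * ((c i : ℝ) / (a i : ℝ)) = (N : ℝ) := by
    rw [hN, Nat.cast_sum]
    refine Finset.sum_congr rfl fun i hi => ?_
    have hi' : i ≤ n := by simpa [Nat.lt_succ_iff] using Finset.mem_range.1 hi
    have hd : a i ∣ a n := aux_advd a ha hi'
    have hne : ((a i : ℝ)) ≠ 0 := (aux_rpos a ha i).ne'
    rw [Nat.cast_mul, Nat.cast_div hd hne]
    field_simp
  have key : (a n : ℝ) * ∑' i, (c i : ℝ) / (a i : ℝ) = (N : ℝ) + ∑' i, gfun a c n i := by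
    rw [hx, hsplit, hfin, htail]
  rw [key]
  have : ((N : ℕ) : ℝ) = ((N : ℤ) : ℝ) := by push_cast; ring
  rw [this, Int.fract_intCast_add]
  exact Int.fract_eq_self.2 ⟨tsum_nonneg (g_nonneg a c n), tsum_g_lt_one a c ha hc n⟩

end Main

/-- Equation (7): `{a_{n-1} x} = c_n/q_n + {a_n x}/q_n` for all `n ≥ 1`. -/
theorem fract_recursion (a c : ℕ → ℕ) (ha : IsArithmeticSeq a)
    (hc : IsCanonicalRep a c) :
    ∀ n, 1 ≤ n →
      Int.fract ((a (n - 1) : ℝ) * ∑' i, (c i : ℝ) / (a i : ℝ)) =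
        (c n : ℝ) / qr a n +
          Int.fract ((a n : ℝ) * ∑' i, (c i : ℝ) / (a i : ℝ)) / qr a n := by
  intro n hn
  obtain ⟨m, rfl⟩ := Nat.exists_eq_succ_of_ne_zero (by omega : n ≠ 0)
  simp only [Nat.succ_sub_one]
  rw [fract_eq a c ha hc m, fract_eq a c ha hc (m+1)]
  have h1 : (0:ℝ) < a m := aux_rpos a ha m
  have h2 : (0:ℝ) < a (m+1) := aux_rpos a ha (m+1)
  have hq : qr a (m+1) = (a (m+1) : ℝ) / (a m : ℝ)  := by
    unfold qr; simp
  rw [Summable.tsum_eq_zero_add (g_summable a c ha hc m)]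
  have hzero : gfun a c m 0 = (c (m+1) : ℝ) * (a m : ℝ) / (a (m+1) : ℝ) := by
    unfold gfun; norm_num
  have hshift : ∑' i, gfun a c m (i+1)
      = ((a m : ℝ) / (a (m+1) : ℝ)) * ∑' i, gfun a c (m+1) i := by
    rw [← tsum_mul_left]
    refine tsum_congr fun i => ?_
    unfold gfun
    have e : i + 1 + m + 1 = i + (m+1) + 1 := by omega
    rw [e]
    rw [div_mul_div_comm, div_eq_div_iff (aux_rpos a ha _).ne' (mul_pos h2 (aux_rpos a ha _)).ne']
    ring
  rw [hzero, hshift, hq]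
  field_simp
end

section
/- Let (a_n) be an arithmetic sequence with ratios q_n, and x ∈ 𝕋 whose support supp(x) is q-bounded. Then x is a topological s-torsion element (a_n x → 0 statistically in 𝕋) if and only if (i) d((supp(x)+1) \ supp(x)) = 0 and (ii) d(supp(x) \ supp_q(x)) = 0. -/
open Filter Topology Set

/-! ### Auxiliary density infrastructure -/

noncomputable def dcnt (A : Set ℕ) (n : ℕ) : ℕ := Nat.card ↥(A ∩ Set.Iio n)

lemma dcnt_def (A : Set ℕ) (n : ℕ) : dcnt A n = (A ∩ Set.Iio n).ncard := by
  rw [dcnt, Nat.card_coe_set_eq]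

lemma finite_inter (A : Set ℕ) (n : ℕ) : (A ∩ Set.Iio n).Finite :=
  (Set.finite_Iio n).subset Set.inter_subset_right

lemma dcnt_mono {A B : Set ℕ} (h : A ⊆ B) (n : ℕ) : dcnt A n ≤ dcnt B n := by
  rw [dcnt_def, dcnt_def]
  exact Set.ncard_le_ncard (Set.inter_subset_inter_left _ h) (finite_inter B n)

lemma dcnt_union_le (A B : Set ℕ) (n : ℕ) : dcnt (A ∪ B) n ≤ dcnt A n + dcnt B n := by
  rw [dcnt_def, dcnt_def, dcnt_def, Set.union_inter_distrib_right]
  exact Set.ncard_union_le _ _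

lemma hasDensity_iff (A : Set ℕ) (δ : ℝ) :
    HasDensity A δ ↔ Filter.Tendsto (fun n => (dcnt A n : ℝ) / n) Filter.atTop (nhds δ) :=
  Iff.rfl

lemma hasDensity_zero_nonneg_aux : True := trivial

lemma hasDensity_zero_of_dcnt_le {A B : Set ℕ} (K : ℕ)
    (h : ∀ n, dcnt A n ≤ dcnt B n + K) (hB : HasDensity B 0) : HasDensity A 0 := by
  rw [hasDensity_iff] at *
  apply squeeze_zero (g := fun n => (dcnt B n : ℝ) / n + (K : ℝ) / n)
  · intro n; positivity
  · intro n
    rcases Nat.eq_zero_or_pos n with rfl | hn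
    · simp
    · rw [← add_div]
      gcongr
      exact_mod_cast h n
  · have h2 : Filter.Tendsto (fun n : ℕ => (K : ℝ) / n) Filter.atTop (nhds 0) :=
      tendsto_const_div_atTop_nhds_zero_nat (K:ℝ)
    simpa using hB.add h2

lemma hasDensity_zero_subset {A B : Set ℕ} (h : A ⊆ B) (hB : HasDensity B 0) :
    HasDensity A 0 :=
  hasDensity_zero_of_dcnt_le 0 (fun n => by simpa using dcnt_mono h n) hB

lemma hasDensity_zero_union {A B : Set ℕ} (hA : HasDensity A 0) (hB : HasDensity B 0) :
    HasDensity (A ∪ B) 0 := by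
  rw [hasDensity_iff] at *
  apply squeeze_zero (g := fun n => (dcnt A n : ℝ) / n + (dcnt B n : ℝ) / n)
  · intro n; positivity
  · intro n
    rcases Nat.eq_zero_or_pos n with rfl | hn
    · simp
    · rw [← add_div]
      gcongr
      exact_mod_cast dcnt_union_le A B n
  · simpa using hA.add hB

lemma dcnt_Iio_add (B : Set ℕ) (n i : ℕ) : dcnt B (n + i) ≤ dcnt B n + i := by
  rw [dcnt_def, dcnt_def]
  have hsub : B ∩ Set.Iio (n + i) ⊆ (B ∩ Set.Iio n) ∪ Set.Ico n (n + i) := by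
    intro m hm
    rcases lt_or_ge m n with h | h
    · exact Or.inl ⟨hm.1, h⟩
    · exact Or.inr ⟨h, hm.2⟩
  calc (B ∩ Set.Iio (n + i)).ncard
      ≤ ((B ∩ Set.Iio n) ∪ Set.Ico n (n + i)).ncard :=
        Set.ncard_le_ncard hsub ((finite_inter B n).union (Set.finite_Ico _ _))
    _ ≤ (B ∩ Set.Iio n).ncard + (Set.Ico n (n + i)).ncard := Set.ncard_union_le _ _
    _ ≤ (B ∩ Set.Iio n).ncard + i := by
        have : (Set.Ico n (n + i)).ncard = i := by
          rw [← Finset.coe_Ico, Set.ncard_coe_finset, Nat.card_Ico]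
          omega
        omega

lemma hasDensity_zero_shift_down {B : Set ℕ} (i : ℕ) (hB : HasDensity B 0) :
    HasDensity {n | n + i ∈ B} 0 := by
  apply hasDensity_zero_of_dcnt_le i ?_ hB
  intro n
  have h1 : dcnt {n | n + i ∈ B} n ≤ dcnt B (n + i) := by
    rw [dcnt_def, dcnt_def]
    refine Set.ncard_le_ncard_of_injOn (fun m => m + i) ?_ ?_ (finite_inter B (n+i))
    · rintro m ⟨hm, hlt⟩
      refine ⟨hm, ?_⟩
      simp only [Set.mem_Iio] at hlt ⊢
      omega
    · intro p _ q _ hpq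
      have : p + i = q + i := hpq
      omega
  exact h1.trans (dcnt_Iio_add B n i)

lemma hasDensity_zero_shift_up {A B : Set ℕ} (i : ℕ)
    (h : ∀ m ∈ A, i ≤ m ∧ m - i ∈ B) (hB : HasDensity B 0) : HasDensity A 0 := by
  apply hasDensity_zero_of_dcnt_le 0 ?_ hB
  intro n
  rw [dcnt_def, dcnt_def, Nat.add_zero]
  refine Set.ncard_le_ncard_of_injOn (fun m => m - i) ?_ ?_ (finite_inter B n)
  · rintro m ⟨hm, hlt⟩
    refine ⟨(h m hm).2, ?_⟩
    simp only [Set.mem_Iio] at hlt ⊢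
    omega
  · rintro p ⟨hp, _⟩ q ⟨hq, _⟩ hpq
    have h1 := (h p hp).1
    have h2 := (h q hq).1
    have : p - i = q - i := hpq
    omega

open scoped Classical
lemma dcnt_filter (A : Set ℕ) (n : ℕ) :
    dcnt A n = ((Finset.range n).filter (· ∈ A)).card := by
  rw [dcnt_def]
  have h : A ∩ Set.Iio n = ↑((Finset.range n).filter (· ∈ A)) := by
    ext m
    simp [Set.mem_Iio, and_comm]
  rw [h, Set.ncard_coe_finset]

lemma dcnt_succ (A : Set ℕ) (n : ℕ) :
    dcnt A (n + 1) = dcnt A n + (if n ∈ A then 1 else 0) := by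
  rw [dcnt_filter, dcnt_filter, Finset.range_add_one, Finset.filter_insert]
  split <;> simp [Finset.card_insert_of_notMem, Finset.notMem_range_self]

lemma mem_succ_img (S : Set ℕ) (n : ℕ) :
    n ∈ (fun k => k + 1) '' S ↔ 0 < n ∧ n - 1 ∈ S := by
  simp only [Set.mem_image]
  constructor
  · rintro ⟨s, hs, rfl⟩
    exact ⟨Nat.succ_pos s, by simpa using hs⟩
  · rintro ⟨hn, hs⟩
    exact ⟨n - 1, hs, by omega⟩

lemma starts_le_ends (S : Set ℕ) (h0 : 0 ∉ S) (n : ℕ) :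
    dcnt (S \ ((fun k => k + 1) '' S)) n ≤ dcnt (((fun k => k + 1) '' S) \ S) n + 1 := by
  have key : ∀ m, (dcnt (S \ ((fun k => k + 1) '' S)) m : ℤ) =
      dcnt (((fun k => k + 1) '' S) \ S) m + (if 0 < m ∧ m - 1 ∈ S then 1 else 0) := by
    intro m
    induction m with
    | zero => simp [dcnt_def, Set.Iio, Set.ncard_empty]
    | succ m ih =>
      rw [dcnt_succ, dcnt_succ]
      push_cast
      rw [ih]
      have himg : m ∈ (fun k => k + 1) '' S ↔ 0 < m ∧ m - 1 ∈ S := mem_succ_img S m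
      have himg1 : (0 < m + 1 ∧ m + 1 - 1 ∈ S) ↔ m ∈ S := by
        simp
      by_cases hS : m ∈ S <;> by_cases hI : 0 < m ∧ m - 1 ∈ S <;>
        simp [Set.mem_diff, himg, himg1, hS, hI] <;> ring
  have := key n
  split_ifs at this <;> omega



lemma hasDensity_empty : HasDensity (∅ : Set ℕ) 0 := by
  have h : (fun n : ℕ => ((Nat.card ↥((∅:Set ℕ) ∩ Set.Iio n)):ℝ)/n) = fun _ => (0:ℝ) := by
    funext n
    simp
  rw [HasDensity, h]
  exact tendsto_const_nhds

lemma hasDensity_zero_biUnion {ι : Type*} (s : Finset ι) (f : ι → Set ℕ)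
    (h : ∀ i ∈ s, HasDensity (f i) 0) : HasDensity (⋃ i ∈ s, f i) 0 := by
  classical
  induction s using Finset.induction_on with
  | empty => simpa using hasDensity_empty
  | @insert j s hj ih =>
    rw [Finset.set_biUnion_insert]
    exact hasDensity_zero_union (h j (Finset.mem_insert_self j s))
      (ih fun i hi => h i (Finset.mem_insert_of_mem hi))


/-! ### Arithmetic sequence basics -/

lemma apos {a : ℕ → ℕ} (ha : IsArithmeticSeq a) (n : ℕ) : 0 < a n := by
  have h1 := ha.2.1.monotone (Nat.zero_le n)
  rw [ha.1] at h1
  omega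

lemma apos' {a : ℕ → ℕ} (ha : IsArithmeticSeq a) (n : ℕ) : (0:ℝ) < a n := by
  exact_mod_cast apos ha n

lemma two_mul_le {a : ℕ → ℕ} (ha : IsArithmeticSeq a) (n : ℕ) : 2 * a n ≤ a (n+1) := by
  obtain ⟨k, hk⟩ := ha.2.2 n
  have hlt : a n < a (n+1) := ha.2.1 (Nat.lt_succ_self n)
  have hp := apos ha n
  have hk2 : 2 ≤ k := by
    rcases Nat.lt_or_ge k 2 with h | h
    · interval_cases k <;> omega
    · exact h
  calc 2 * a n = a n * 2 := by ring
    _ ≤ a n * k := Nat.mul_le_mul_left _ hk2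
    _ = a (n+1) := hk.symm

lemma geo {a : ℕ → ℕ} (ha : IsArithmeticSeq a) (n j : ℕ) : a n * 2^j ≤ a (n+j) := by
  induction j with
  | zero => simp
  | succ j ih =>
    have h := two_mul_le ha (n+j)
    calc a n * 2^(j+1) = (a n * 2^j) * 2 := by ring
      _ ≤ a (n+j) * 2 := Nat.mul_le_mul_right _ ih
      _ ≤ a (n+j+1) := by omega

lemma dvd_le {a : ℕ → ℕ} (ha : IsArithmeticSeq a) {m n : ℕ} (h : m ≤ n) : a m ∣ a n := by
  induction n, h using Nat.le_induction with
  | base => exact dvd_rfl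
  | succ n hmn ih => exact ih.trans (ha.2.2 n)

lemma cast_q {a : ℕ → ℕ} (ha : IsArithmeticSeq a) (n : ℕ) :
    ((a (n+1) / a n : ℕ) : ℝ) = (a (n+1):ℝ) / a n :=
  Nat.cast_div (ha.2.2 n) (apos' ha n).ne'

lemma cq {a c : ℕ → ℕ} (ha : IsArithmeticSeq a) (hc : IsCanonicalRep a c) (n : ℕ) :
    (c (n+1) : ℝ) + 1 ≤ (a (n+1) : ℝ) / a n := by
  have h := hc.2.1 (n+1) (Nat.succ_le_succ (Nat.zero_le n))
  have h' : (c (n+1) + 1 : ℕ) ≤ a (n+1) / a n := h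
  calc (c (n+1):ℝ) + 1 = ((c (n+1) + 1 : ℕ) : ℝ) := by push_cast; ring
    _ ≤ ((a (n+1) / a n : ℕ) : ℝ) := by exact_mod_cast h'
    _ = (a (n+1):ℝ) / a n := cast_q ha n

lemma term_bound {a c : ℕ → ℕ} (ha : IsArithmeticSeq a) (hc : IsCanonicalRep a c) (n : ℕ) :
    (c (n+1):ℝ) / a (n+1) ≤ 1 / a n - 1 / a (n+1) := by
  have h := cq ha hc n
  have h0 := apos' ha n
  have h1 := apos' ha (n+1)
  have hd : 1 / (a n:ℝ) - 1 / a (n+1) = ((a (n+1):ℝ) - a n) / (a n * a (n+1)) := by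
    field_simp
  rw [hd, div_le_div_iff₀ h1 (by positivity)]
  have key : ((c (n+1):ℝ) + 1) * a n ≤ a (n+1) := by
    rw [← le_div_iff₀ h0]
    exact h
  nlinarith [h0.le, h1.le, (Nat.cast_nonneg (c (n+1)) : (0:ℝ) ≤ c (n+1))]

lemma term_le_geo {a c : ℕ → ℕ} (ha : IsArithmeticSeq a) (hc : IsCanonicalRep a c) (j : ℕ) :
    (c j:ℝ) / a j ≤ 2 * (1/2)^j := by
  cases j with
  | zero => simp [hc.1]
  | succ n =>
    have h := term_bound ha hc n
    have hg : (2:ℝ)^n ≤ a n := by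
      have := geo ha 0 n
      rw [ha.1, one_mul, Nat.zero_add] at this
      exact_mod_cast this
    have h0 := apos' ha n
    have h1 := apos' ha (n+1)
    have h2 : 1 / (a n:ℝ) ≤ (1/2)^n := by
      rw [div_pow, one_pow, div_le_div_iff₀ h0 (by positivity)]
      linarith
    have h3 : (2:ℝ) * (1/2)^(n+1) = (1/2)^n := by ring
    have h4 : (0:ℝ) < a (n+1) := h1
    nlinarith [div_nonneg (Nat.cast_nonneg (c (n+1)) : (0:ℝ) ≤ c (n+1)) h1.le,
      div_pos one_pos h1]

lemma summable_base {a c : ℕ → ℕ} (ha : IsArithmeticSeq a) (hc : IsCanonicalRep a c) :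
    Summable (fun j => (c j:ℝ) / a j) := by
  apply Summable.of_nonneg_of_le (fun j => by positivity) (term_le_geo ha hc)
  exact summable_geometric_two.mul_left 2

lemma summable_shift {a c : ℕ → ℕ} (ha : IsArithmeticSeq a) (hc : IsCanonicalRep a c) (m : ℕ) :
    Summable (fun k => (c (m+k):ℝ) / a (m+k)) :=
  ((summable_nat_add_iff m).2 (summable_base ha hc)).congr (fun k => by rw [add_comm])

/-- The tail sum `∑_{k>m} c_k/a_k`. -/
noncomputable def tailSum (a c : ℕ → ℕ) (m : ℕ) : ℝ := ∑' k, (c (m+1+k) : ℝ) / a (m+1+k)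

/-- `T m = a m · tail m`, the representative in `[0,1)` of `a m • x`. -/
noncomputable def TT (a c : ℕ → ℕ) (m : ℕ) : ℝ := (a m : ℝ) * tailSum a c m

lemma tailSum_nonneg (a c : ℕ → ℕ) (m : ℕ) : 0 ≤ tailSum a c m :=
  tsum_nonneg (fun k => by positivity)

lemma TT_nonneg (a c : ℕ → ℕ) (m : ℕ) : 0 ≤ TT a c m :=
  mul_nonneg (Nat.cast_nonneg _) (tailSum_nonneg a c m)

lemma tailSum_le {a c : ℕ → ℕ} (ha : IsArithmeticSeq a) (hc : IsCanonicalRep a c) (m : ℕ) :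
    tailSum a c m ≤ 1 / a m := by
  apply Summable.tsum_le_of_sum_range_le (summable_shift ha hc (m+1))
  intro K
  have hstep : ∀ i ∈ Finset.range K,
      (c (m+1+i):ℝ) / a (m+1+i) ≤ 1 / a (m+i) - 1 / a (m+i+1) := by
    intro i _
    rw [show m+1+i = m+i+1 from by omega]
    exact term_bound ha hc (m+i)
  calc ∑ i ∈ Finset.range K, (c (m+1+i):ℝ) / a (m+1+i)
      ≤ ∑ i ∈ Finset.range K, (1 / (a (m+i):ℝ) - 1 / a (m+i+1)) := Finset.sum_le_sum hstep
    _ = 1 / (a (m+0):ℝ) - 1 / a (m+K) := Finset.sum_range_sub' (fun i => 1 / (a (m+i):ℝ)) K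
    _ ≤ 1 / a m := by
        have := apos' ha (m+K)
        have h2 : (0:ℝ) ≤ 1 / a (m+K) := by positivity
        simp only [Nat.add_zero]
        linarith

lemma TT_le_one {a c : ℕ → ℕ} (ha : IsArithmeticSeq a) (hc : IsCanonicalRep a c) (m : ℕ) :
    TT a c m ≤ 1 := by
  have h := tailSum_le ha hc m
  have h0 := apos' ha m
  calc TT a c m = (a m:ℝ) * tailSum a c m := rfl
    _ ≤ (a m:ℝ) * (1 / a m) := by
        exact mul_le_mul_of_nonneg_left h h0.le
    _ = 1 := by field_simp

lemma tail_rec {a c : ℕ → ℕ} (ha : IsArithmeticSeq a) (hc : IsCanonicalRep a c) (m : ℕ) :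
    tailSum a c m = (c (m+1):ℝ) / a (m+1) + tailSum a c (m+1) := by
  have h := Summable.tsum_eq_zero_add (summable_shift ha hc (m+1))
  rw [tailSum, h]
  congr 1
  apply tsum_congr
  intro k
  rw [show m+1+(k+1) = (m+1)+1+k from by omega]

lemma TT_rec {a c : ℕ → ℕ} (ha : IsArithmeticSeq a) (hc : IsCanonicalRep a c) (m : ℕ) :
    TT a c m = ((a m:ℝ) / a (m+1)) * ((c (m+1):ℝ) + TT a c (m+1)) := by
  rw [TT, tail_rec ha hc m, TT]
  have h0 := (apos' ha m).ne'
  have h1 := (apos' ha (m+1)).ne'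
  field_simp
  all_goals tauto

lemma TT_zero_run {a c : ℕ → ℕ} (ha : IsArithmeticSeq a) (hc : IsCanonicalRep a c) (m : ℕ)
    (j : ℕ) (h : ∀ i < j, c (m+1+i) = 0) :
    TT a c m = ((a m:ℝ) / a (m+j)) * TT a c (m+j) := by
  induction j with
  | zero =>
    have h0 := (apos' ha m).ne'
    simp only [Nat.add_zero]
    field_simp
  | succ j ih =>
    have hj : ∀ i < j, c (m+1+i) = 0 := fun i hi => h i (by omega)
    rw [ih hj, TT_rec ha hc (m+j)]
    have hc0 : c (m+j+1) = 0 := by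
      rw [show m+j+1 = m+1+j from by omega]
      exact h j (Nat.lt_succ_self j)
    rw [hc0]
    have h0 := (apos' ha (m+j)).ne'
    have h1 := (apos' ha (m+j+1)).ne'
    push_cast
    rw [show m+(j+1) = m+j+1 from by omega]
    field_simp
    ring_nf
    all_goals tauto

lemma TT_max_run {a c : ℕ → ℕ} (ha : IsArithmeticSeq a) (hc : IsCanonicalRep a c) (m : ℕ)
    (j : ℕ) (h : ∀ i < j, (c (m+1+i):ℝ) + 1 = (a (m+1+i):ℝ) / a (m+i)) :
    1 - TT a c m = ((a m:ℝ) / a (m+j)) * (1 - TT a c (m+j)) := by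
  induction j with
  | zero =>
    have h0 := (apos' ha m).ne'
    simp only [Nat.add_zero]
    field_simp
  | succ j ih =>
    have hj : ∀ i < j, (c (m+1+i):ℝ) + 1 = (a (m+1+i):ℝ) / a (m+i) := fun i hi => h i (by omega)
    rw [ih hj, TT_rec ha hc (m+j)]
    have hcm : (c (m+j+1):ℝ) + 1 = (a (m+j+1):ℝ) / a (m+j) := by
      have := h j (Nat.lt_succ_self j)
      rw [show m+1+j = m+j+1 from by omega] at this
      exact this
    have h0 := apos' ha (m+j)
    have h1 := apos' ha (m+j+1)
    have h2 := apos' ha m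
    rw [show m+(j+1) = m+j+1 from by omega]
    have hcm' : (c (m+j+1):ℝ) = (a (m+j+1):ℝ) / a (m+j) - 1 := by linarith
    rw [hcm']
    field_simp
    ring_nf
    all_goals tauto

lemma ratio_le {a : ℕ → ℕ} (ha : IsArithmeticSeq a) (m j : ℕ) :
    (a m:ℝ) / a (m+j) ≤ (1/2)^j := by
  have hg : ((a m * 2^j : ℕ):ℝ) ≤ a (m+j) := by exact_mod_cast geo ha m j
  push_cast at hg
  have h1 := apos' ha (m+j)
  rw [div_le_iff₀ h1]
  calc (a m:ℝ) = (1/2)^j * ((a m:ℝ) * 2^j) := by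
        rw [mul_comm, mul_assoc, ← mul_pow]
        norm_num
    _ ≤ (1/2)^j * a (m+j) := by
        apply mul_le_mul_of_nonneg_left hg (by positivity)

/-! ### AddCircle facts -/

lemma coe_nat_eq_zero (H : ℕ) : ((H : ℝ) : AddCircle (1:ℝ)) = 0 := by
  rw [AddCircle.coe_eq_zero_iff]
  exact ⟨H, by simp [zsmul_eq_mul]⟩

lemma nsmul_coe (n : ℕ) (X : ℝ) :
    n • ((X : ℝ) : AddCircle (1:ℝ)) = ((n * X : ℝ) : AddCircle (1:ℝ)) := by
  rw [← nsmul_eq_mul]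
  exact (AddCircle.coe_nsmul _).symm

lemma head_int {a c : ℕ → ℕ} (ha : IsArithmeticSeq a) (m : ℕ) :
    ∃ H : ℕ, (a m:ℝ) * ∑ k ∈ Finset.range (m+1), (c k:ℝ) / a k = H := by
  refine ⟨∑ k ∈ Finset.range (m+1), (a m / a k) * c k, ?_⟩
  rw [Finset.mul_sum]
  push_cast
  apply Finset.sum_congr rfl
  intro k hk
  have hk' : k ≤ m := by
    have := Finset.mem_range.1 hk
    omega
  have hdvd := dvd_le ha hk'
  rw [Nat.cast_div hdvd (apos' ha k).ne']
  have h0 := (apos' ha k).ne'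
  field_simp

lemma smul_eq_TT {a c : ℕ → ℕ} (ha : IsArithmeticSeq a) (hc : IsCanonicalRep a c)
    (x : AddCircle (1 : ℝ))
    (hx : x = ((∑' n, (c n : ℝ) / (a n : ℝ) : ℝ) : AddCircle (1 : ℝ))) (m : ℕ) :
    a m • x = ((TT a c m : ℝ) : AddCircle (1:ℝ)) := by
  rw [hx, nsmul_coe]
  have hsplit : (∑' n, (c n : ℝ) / (a n : ℝ)) =
      (∑ k ∈ Finset.range (m+1), (c k:ℝ) / a k) + tailSum a c m := by
    rw [← Summable.sum_add_tsum_nat_add (m+1) (summable_base ha hc)]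
    congr 1
    apply tsum_congr
    intro k
    rw [show k + (m+1) = m+1+k from by omega]
  obtain ⟨H, hH⟩ := head_int ha (c := c) m
  have heq : (a m:ℝ) * (∑' n, (c n : ℝ) / (a n : ℝ)) = (H:ℝ) + TT a c m := by
    rw [hsplit, mul_add, hH, TT]
  rw [heq, AddCircle.coe_add, coe_nat_eq_zero, zero_add]

lemma norm_coe_unit (t : ℝ) : ‖((t:ℝ) : AddCircle (1:ℝ))‖ = |t - round t| := by
  rw [AddCircle.norm_eq]
  norm_num

lemma norm_le_self' {t : ℝ} (h0 : 0 ≤ t) : ‖((t:ℝ) : AddCircle (1:ℝ))‖ ≤ t := by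
  rw [norm_coe_unit]
  have h := round_le t 0
  simpa [abs_of_nonneg h0] using h

lemma norm_le_one_sub {t : ℝ} (h1 : t ≤ 1) : ‖((t:ℝ) : AddCircle (1:ℝ))‖ ≤ 1 - t := by
  rw [norm_coe_unit]
  have h := round_le t 1
  have h2 : |t - (1:ℤ)| = 1 - t := by
    push_cast
    rw [abs_sub_comm, abs_of_nonneg (by linarith)]
  rw [h2] at h
  exact h

lemma min_le_norm {t : ℝ} (h0 : 0 ≤ t) (h1 : t ≤ 1) :
    min t (1-t) ≤ ‖((t:ℝ) : AddCircle (1:ℝ))‖ := by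
  rw [norm_coe_unit]
  rcases le_or_gt (round t) 0 with h | h
  · have hz : ((round t):ℝ) ≤ 0 := by exact_mod_cast h
    calc min t (1-t) ≤ t := min_le_left _ _
      _ ≤ t - round t := by linarith
      _ ≤ |t - round t| := le_abs_self _
  · have hz : (1:ℝ) ≤ (round t : ℝ) := by exact_mod_cast h
    calc min t (1-t) ≤ 1 - t := min_le_right _ _
      _ ≤ (round t : ℝ) - t := by linarith
      _ ≤ |t - round t| := by rw [abs_sub_comm]; exact le_abs_self _


/-- Corollary: if `supp(x)` is `q`-bounded, then `x` is a topological `s`-torsion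
element iff `d((supp(x)+1) \ supp(x)) = 0` and `d(supp(x) \ supp_q(x)) = 0`. -/
theorem sTorsion_iff_of_qBounded_supp (a c : ℕ → ℕ) (ha : IsArithmeticSeq a)
    (hc : IsCanonicalRep a c) (x : AddCircle (1 : ℝ))
    (hx : x = ((∑' n, (c n : ℝ) / (a n : ℝ) : ℝ) : AddCircle (1 : ℝ)))
    (hqb : QBounded a (suppRep c)) :
    StatNhdTendsto (fun n => a n • x) (0 : AddCircle (1 : ℝ)) ↔
      HasDensity (((fun n => n + 1) '' suppRep c) \ suppRep c) 0 ∧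
        HasDensity (suppRep c \ suppqRep a c) 0 := by
  classical
  have hsmul : ∀ m, a m • x = ((TT a c m : ℝ) : AddCircle (1:ℝ)) := smul_eq_TT ha hc x hx
  have hT0 : ∀ m, 0 ≤ TT a c m := TT_nonneg a c
  have hT1 : ∀ m, TT a c m ≤ 1 := TT_le_one ha hc
  have h0S : (0:ℕ) ∉ suppRep c := fun h => absurd h.1 (by omega)
  have hq_ge2 : ∀ s : ℕ, (2:ℝ) ≤ (a (s+1):ℝ)/a s := by
    intro s
    have h2 : (2:ℝ) * a s ≤ a (s+1) := by exact_mod_cast two_mul_le ha s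
    have h0 := apos' ha s
    rw [le_div_iff₀ h0]
    linarith
  constructor
  · -- torsion ⇒ densities
    intro hstat
    obtain ⟨M0, hM0⟩ := hqb
    have hM : ∀ n ∈ suppRep c, a n / a (n-1) ≤ max M0 2 :=
      fun n hn => (hM0 n hn).trans (le_max_left _ _)
    set M : ℝ := ((max M0 2 : ℕ) : ℝ) with hMdef
    have hM2 : (2:ℝ) ≤ M := by
      rw [hMdef]
      exact_mod_cast le_max_right M0 2
    have hMpos : (0:ℝ) < M := by linarith
    set ε : ℝ := 1/(2*M) with hεdef
    have hε : 0 < ε := by positivity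
    have hεM : ε ≤ 1/M := by
      rw [hεdef, div_le_div_iff₀ (by positivity) hMpos]
      linarith
    have hbad : HasDensity {n | ε ≤ ‖a n • x‖} 0 := by
      have h := hstat (Metric.ball 0 ε) (Metric.ball_mem_nhds _ hε)
      apply hasDensity_zero_subset ?_ h
      intro n hn
      simp only [Set.mem_setOf_eq] at hn ⊢
      intro hmem
      rw [Metric.mem_ball, dist_zero_right] at hmem
      linarith
    have hq_ub : ∀ s : ℕ, s + 1 ∈ suppRep c → (a (s+1):ℝ)/a s ≤ M := by
      intro s hs
      have h1 := hM _ hs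
      calc (a (s+1):ℝ)/a s = ((a (s+1) / a s : ℕ):ℝ) := (cast_q ha s).symm
        _ ≤ M := by
            rw [hMdef]
            exact_mod_cast h1
    refine ⟨?_, ?_⟩
    · -- d((S+1)\S) = 0
      apply hasDensity_zero_shift_up 2 ?_ hbad
      intro m hm
      rw [Set.mem_diff, mem_succ_img] at hm
      obtain ⟨⟨hm0, hms⟩, hmS⟩ := hm
      have hs1 : 1 ≤ m - 1 := hms.1
      have h2m : 2 ≤ m := by omega
      refine ⟨h2m, ?_⟩
      set n := m - 2 with hndef
      have hmn1 : m - 1 = n + 1 := by omega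
      have hmn2 : m = n + 2 := by omega
      rw [hmn1] at hms
      have hc2 : c (n+2) = 0 := by
        by_contra hne
        exact hmS ⟨by omega, by rw [hmn2]; exact fun h => hne (by rw [← hmn2]; rw [hmn2]; exact h)⟩
      have hc1 : (1:ℝ) ≤ c (n+1) := by
        exact_mod_cast Nat.one_le_iff_ne_zero.2 hms.2
      have hqM := hq_ub n hms
      have hcub := cq ha hc n
      -- TT (n+1) ≤ 1/2
      have hT2 : TT a c (n+1) ≤ 1/2 := by
        rw [TT_rec ha hc (n+1)]
        have hr := ratio_le ha (n+1) 1
        rw [pow_one] at hr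
        have hc2' : c (n+1+1) = 0 := hc2
        rw [hc2']
        have ht1 := hT1 (n+1+1)
        have ht0 := hT0 (n+1+1)
        have hrpos : (0:ℝ) ≤ (a (n+1):ℝ)/a (n+1+1) :=
          div_nonneg (apos' ha (n+1)).le (apos' ha (n+1+1)).le
        push_cast
        nlinarith
      have hrec := TT_rec ha hc n
      have hq2 := hq_ge2 n
      have hr_pos : (0:ℝ) < (a n:ℝ)/a (n+1) := div_pos (apos' ha n) (apos' ha (n+1))
      have hrq : ((a n:ℝ)/a (n+1)) * ((a (n+1):ℝ)/a n) = 1 := by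
        have u0 := (apos' ha n).ne'
        have u1 := (apos' ha (n+1)).ne'
        field_simp
      have hrM : 1/M ≤ (a n:ℝ)/a (n+1) := by
        rw [div_le_iff₀ hMpos]
        nlinarith
      have ht0 := hT0 (n+1)
      have hε2 : ε ≤ ((a n:ℝ)/a (n+1))/2 := by
        rw [hεdef, show (1:ℝ)/(2*M) = (1/M)/2 from by ring]
        linarith
      have hmin1 : ε ≤ TT a c n := by
        rw [hrec]
        have hone : ((a n:ℝ)/a (n+1)) * 1 ≤ ((a n:ℝ)/a (n+1)) * ((c (n+1):ℝ) + TT a c (n+1)) :=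
          mul_le_mul_of_nonneg_left (by linarith) hr_pos.le
        calc ε ≤ 1/M := hεM
          _ ≤ (a n:ℝ)/a (n+1) := hrM
          _ = ((a n:ℝ)/a (n+1)) * 1 := by ring
          _ ≤ _ := hone
      have hmin2 : ε ≤ 1 - TT a c n := by
        rw [hrec]
        have hkey : (c (n+1):ℝ) + TT a c (n+1) ≤ (a (n+1):ℝ)/a n - 1/2 := by linarith
        have hprod := mul_le_mul_of_nonneg_left hkey hr_pos.le
        have hexp : ((a n:ℝ)/a (n+1)) * ((a (n+1):ℝ)/a n - 1/2)
            = 1 - ((a n:ℝ)/a (n+1))/2 := by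
          rw [mul_sub, hrq]
          ring
        rw [hexp] at hprod
        linarith
      show ε ≤ ‖a n • x‖
      rw [hsmul n]
      calc ε ≤ min (TT a c n) (1 - TT a c n) := le_min hmin1 hmin2
        _ ≤ _ := min_le_norm (hT0 n) (hT1 n)
    · -- d(S \ Sq) = 0
      apply hasDensity_zero_shift_up 1 ?_ hbad
      intro m hm
      obtain ⟨hmS, hmq⟩ := hm
      have h1m : 1 ≤ m := hmS.1
      refine ⟨h1m, ?_⟩
      set n := m - 1 with hndef
      have hmn : m = n + 1 := by omega
      rw [hmn] at hmS hmq
      have hc1 : (1:ℝ) ≤ c (n+1) := by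
        exact_mod_cast Nat.one_le_iff_ne_zero.2 hmS.2
      have hqM := hq_ub n hmS
      have hnat : c (n+1) + 2 ≤ a (n+1) / a n := by
        have hlt := hc.2.1 (n+1) (by omega)
        simp only [Nat.add_sub_cancel] at hlt
        have hne : ¬ (c (n+1) + 1 = a (n+1)/a n) := by
          intro h
          exact hmq ⟨by omega, h⟩
        generalize hQ : a (n+1) / a n = Q at hlt hne ⊢
        omega
      have hcub2 : (c (n+1):ℝ) + 2 ≤ (a (n+1):ℝ)/a n := by
        calc (c (n+1):ℝ) + 2 = ((c (n+1) + 2 : ℕ):ℝ) := by push_cast; ring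
          _ ≤ ((a (n+1) / a n : ℕ):ℝ) := by exact_mod_cast hnat
          _ = (a (n+1):ℝ)/a n := cast_q ha n
      have hrec := TT_rec ha hc n
      have hq2 := hq_ge2 n
      have hr_pos : (0:ℝ) < (a n:ℝ)/a (n+1) := div_pos (apos' ha n) (apos' ha (n+1))
      have hrq : ((a n:ℝ)/a (n+1)) * ((a (n+1):ℝ)/a n) = 1 := by
        have u0 := (apos' ha n).ne'
        have u1 := (apos' ha (n+1)).ne'
        field_simp
      have hrM : 1/M ≤ (a n:ℝ)/a (n+1) := by
        rw [div_le_iff₀ hMpos]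
        nlinarith
      have ht0 := hT0 (n+1)
      have ht1 := hT1 (n+1)
      have hmin1 : ε ≤ TT a c n := by
        rw [hrec]
        have hone : ((a n:ℝ)/a (n+1)) * 1 ≤ ((a n:ℝ)/a (n+1)) * ((c (n+1):ℝ) + TT a c (n+1)) :=
          mul_le_mul_of_nonneg_left (by linarith) hr_pos.le
        calc ε ≤ 1/M := hεM
          _ ≤ (a n:ℝ)/a (n+1) := hrM
          _ = ((a n:ℝ)/a (n+1)) * 1 := by ring
          _ ≤ _ := hone
      have hmin2 : ε ≤ 1 - TT a c n := by
        rw [hrec]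
        have hkey : (c (n+1):ℝ) + TT a c (n+1) ≤ (a (n+1):ℝ)/a n - 1 := by linarith
        have hprod := mul_le_mul_of_nonneg_left hkey hr_pos.le
        have hexp : ((a n:ℝ)/a (n+1)) * ((a (n+1):ℝ)/a n - 1)
            = 1 - ((a n:ℝ)/a (n+1)) := by
          rw [mul_sub, hrq]
          ring
        rw [hexp] at hprod
        calc ε ≤ 1/M := hεM
          _ ≤ (a n:ℝ)/a (n+1) := hrM
          _ ≤ 1 - ((a n:ℝ)/a (n+1)) * ((c (n+1):ℝ) + TT a c (n+1)) := by linarith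
      show ε ≤ ‖a n • x‖
      rw [hsmul n]
      calc ε ≤ min (TT a c n) (1 - TT a c n) := le_min hmin1 hmin2
        _ ≤ _ := min_le_norm (hT0 n) (hT1 n)
  · -- densities ⇒ torsion
    rintro ⟨hE2d, hE1d⟩
    have hE3d : HasDensity (suppRep c \ ((fun n => n + 1) '' suppRep c)) 0 :=
      hasDensity_zero_of_dcnt_le 1 (starts_le_ends _ h0S) hE2d
    set E : Set ℕ := (suppRep c \ suppqRep a c) ∪
        ((((fun n => n + 1) '' suppRep c) \ suppRep c) ∪
          (suppRep c \ ((fun n => n + 1) '' suppRep c))) with hEdef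
    have hEd : HasDensity E 0 :=
      hasDensity_zero_union hE1d (hasDensity_zero_union hE2d hE3d)
    intro U hU
    obtain ⟨ε, hε, hball⟩ := Metric.mem_nhds_iff.1 hU
    obtain ⟨k, hk⟩ : ∃ k : ℕ, (1/2:ℝ)^k < ε := exists_pow_lt_of_lt_one hε (by norm_num)
    apply hasDensity_zero_subset (B := ⋃ i ∈ Finset.Icc 1 k, {n | n + i ∈ E}) ?_ ?_
    · intro n hn
      simp only [Set.mem_setOf_eq] at hn
      by_contra hcon
      simp only [Set.mem_iUnion, Set.mem_setOf_eq, Finset.mem_Icc, not_exists, not_and,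
        exists_prop] at hcon
      have hgood : ∀ i, 1 ≤ i → i ≤ k → n + i ∉ E := by
        intro i h1 h2
        exact hcon i ⟨h1, h2⟩
      apply hn
      apply hball
      rw [Metric.mem_ball, dist_zero_right, hsmul n]
      have hbound : ‖((TT a c n:ℝ) : AddCircle (1:ℝ))‖ ≤ (1/2)^k := by
        by_cases h1 : n + 1 ∈ suppRep c
        · -- run of maximal digits
          have hwin : ∀ i, 1 ≤ i → i ≤ k → n + i ∈ suppRep c := by
            intro i
            induction i with
            | zero => omega
            | succ i ih =>
              intro _ hik
              rcases Nat.eq_zero_or_pos i with rfl | hi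
              · exact h1
              · have hprev := ih (by omega) (by omega)
                by_contra hnot
                have himg : n + (i+1) ∈ (fun m => m + 1) '' suppRep c := by
                  rw [mem_succ_img]
                  exact ⟨by omega, by simpa using hprev⟩
                exact hgood (i+1) (by omega) hik (Or.inr (Or.inl ⟨himg, hnot⟩))
          have hmax : ∀ i < k, (c (n+1+i):ℝ) + 1 = (a (n+1+i):ℝ)/a (n+i) := by
            intro i hik
            have hmem := hwin (i+1) (by omega) (by omega)
            have hnq : n + (i+1) ∈ suppqRep a c := by
              by_contra hnot
              exact hgood (i+1) (by omega) (by omega) (Or.inl ⟨hmem, hnot⟩)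
            have heq := hnq.2
            have hidx : n + (i+1) - 1 = n + i := by omega
            rw [hidx] at heq
            have heq' : c ((n+i)+1) + 1 = a ((n+i)+1) / a (n+i) := by
              rw [show (n+i)+1 = n+(i+1) from by omega]
              exact heq
            calc (c (n+1+i):ℝ) + 1 = ((c ((n+i)+1) + 1 : ℕ):ℝ) := by
                  rw [show n+1+i = (n+i)+1 from by omega]
                  push_cast
                  ring
              _ = ((a ((n+i)+1) / a (n+i) : ℕ):ℝ) := by rw [heq']
              _ = (a ((n+i)+1):ℝ)/a (n+i) := cast_q ha (n+i)
              _ = (a (n+1+i):ℝ)/a (n+i) := by rw [show n+1+i = (n+i)+1 from by omega]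
          have hrun := TT_max_run ha hc n k hmax
          have hr := ratio_le ha n k
          have hrnn : (0:ℝ) ≤ (a n:ℝ)/a (n+k) :=
            div_nonneg (apos' ha n).le (apos' ha (n+k)).le
          have hub : 1 - TT a c n ≤ (1/2)^k := by
            rw [hrun]
            nlinarith [hT0 (n+k), hT1 (n+k)]
          calc ‖((TT a c n:ℝ) : AddCircle (1:ℝ))‖ ≤ 1 - TT a c n := norm_le_one_sub (hT1 n)
            _ ≤ (1/2)^k := hub
        · -- run of zero digits
          have hwin : ∀ i, 1 ≤ i → i ≤ k → n + i ∉ suppRep c := by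
            intro i
            induction i with
            | zero => omega
            | succ i ih =>
              intro _ hik
              rcases Nat.eq_zero_or_pos i with rfl | hi
              · exact h1
              · have hprev := ih (by omega) (by omega)
                intro hmem
                have hnimg : n + (i+1) ∉ (fun m => m + 1) '' suppRep c := by
                  rw [mem_succ_img]
                  rintro ⟨-, hs⟩
                  exact hprev (by simpa using hs)
                exact hgood (i+1) (by omega) hik (Or.inr (Or.inr ⟨hmem, hnimg⟩))
          have hzero : ∀ i < k, c (n+1+i) = 0 := by
            intro i hik
            have hni := hwin (i+1) (by omega) (by omega)
            by_contra hne
            exact hni ⟨by omega, by rw [show n+(i+1) = n+1+i from by omega]; exact hne⟩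
          have hrun := TT_zero_run ha hc n k hzero
          have hr := ratio_le ha n k
          have hrnn : (0:ℝ) ≤ (a n:ℝ)/a (n+k) :=
            div_nonneg (apos' ha n).le (apos' ha (n+k)).le
          have hub : TT a c n ≤ (1/2)^k := by
            rw [hrun]
            nlinarith [hT0 (n+k), hT1 (n+k)]
          calc ‖((TT a c n:ℝ) : AddCircle (1:ℝ))‖ ≤ TT a c n := norm_le_self' (hT0 n)
            _ ≤ (1/2)^k := hub
      linarith
    · apply hasDensity_zero_biUnion
      intro i _
      exact hasDensity_zero_shift_down i hEd
end
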